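/- Let μ ∈ ℝ, σ > 0 and β ≥ 0. Then the off-diagonal entry of the matrix K_β(μ,σ) = ∫₀^∞ u uᵀ f_{μ,σ}^{1+2β} dx − ξ ξᵀ (where ξ = ∫₀^∞ u f_{μ,σ}^{1+β} dx) satisfies ∫₀^∞ u₁(x) u₂(x) f_{μ,σ}(x)^{1+2β} dx − ( ∫₀^∞ u₁(x) f_{μ,σ}(x)^{1+β} dx ) · ( ∫₀^∞ u₂(x) f_{μ,σ}(x)^{1+β} dx ) = L*(β,μ,σ) · β( 4β − 4 − 8β²σ²/(1+2β) ) + L**(β,μ,σ) · σβ²(βσ² − β − 1)/(1+β). -/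

import Mathlib

open Real MeasureTheory Set
open Filter

/-- The log-normal density with parameters `μ` and `σ`. -/
noncomputable def lognormalPdf (μ σ : ℝ) (x : ℝ) : ℝ :=
  if 0 < x then
    (1 / (x * σ * Real.sqrt (2 * Real.pi))) * Real.exp (-(Real.log x - μ) ^ 2 / (2 * σ ^ 2))
  else 0

/-- First component of the score function of the log-normal model. -/
noncomputable def scoreU1 (μ σ : ℝ) (x : ℝ) : ℝ := (Real.log x - μ) / σ ^ 2

/-- Second component of the score function of the log-normal model. -/
noncomputable def scoreU2 (μ σ : ℝ) (x : ℝ) : ℝ := ((Real.log x - μ) ^ 2 - σ ^ 2) / σ ^ 3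

/-- The factor `L*(β, μ, σ)`. -/
noncomputable def Lstar (β μ σ : ℝ) : ℝ :=
  Real.exp (-2 * β * μ + 2 * β ^ 2 * σ ^ 2 / (1 + 2 * β)) /
    (σ ^ (2 * β + 1) * (2 * Real.pi) ^ β * (1 + 2 * β) ^ ((5 : ℝ) / 2))

/-- The factor `L**(β, μ, σ)`. -/
noncomputable def Lstarstar (β μ σ : ℝ) : ℝ :=
  Real.exp (-2 * β * μ + β ^ 2 * σ ^ 2 / (1 + β)) /
    (σ ^ (2 * β + 2) * (2 * Real.pi) ^ β * (1 + β) ^ 3)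

section GaussAux

lemma intble_abs_pow_gauss {a : ℝ} (ha : 0 < a) (k : ℕ) :
    Integrable (fun x : ℝ => |x| ^ k * Real.exp (-a * x ^ 2)) := by
  have hbase : IntegrableOn (fun x : ℝ => |x| ^ k * Real.exp (-a * x ^ 2)) (Ioi 0) := by
    apply (integrableOn_rpow_mul_exp_neg_mul_sq ha
      (s := (k : ℝ)) (by exact lt_of_lt_of_le (by norm_num) (Nat.cast_nonneg k))).congr_fun
      ?_ measurableSet_Ioi
    intro x hx
    simp [Real.rpow_natCast, abs_of_pos (show (0:ℝ) < x from hx)]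
  rw [← integrableOn_univ, ← Iio_union_Ici (a := (0:ℝ)), integrableOn_union]
  constructor
  · rw [← (Measure.measurePreserving_neg (volume : Measure ℝ)).integrableOn_comp_preimage
        (Homeomorph.neg ℝ).measurableEmbedding]
    simp only [Function.comp_def, neg_sq, abs_neg, neg_preimage, neg_Iio, neg_zero]
    exact hbase
  · rw [integrableOn_Ici_iff_integrableOn_Ioi]
    exact hbase

lemma intble_pow_gauss {a : ℝ} (ha : 0 < a) (k : ℕ) :
    Integrable (fun x : ℝ => x ^ k * Real.exp (-a * x ^ 2)) := by
  apply (intble_abs_pow_gauss ha k).mono' ?_ ?_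
  · exact ((continuous_pow k).mul (by continuity)).aestronglyMeasurable
  · filter_upwards with x
    rw [norm_mul, Real.norm_eq_abs, Real.norm_eq_abs, abs_pow,
      abs_of_nonneg (Real.exp_pos _).le]

lemma odd_zero {f : ℝ → ℝ} (hf : ∀ x, f (-x) = - f x) : ∫ x : ℝ, f x = 0 := by
  have h := MeasureTheory.integral_neg_eq_self f (volume : Measure ℝ)
  simp_rw [hf, integral_neg] at h
  linarith

lemma gauss_m1 {a : ℝ} : ∫ x : ℝ, x * Real.exp (-a * x ^ 2) = 0 := by
  apply odd_zero; intro x; simp [neg_mul]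

lemma gauss_m3 {a : ℝ} : ∫ x : ℝ, x ^ 3 * Real.exp (-a * x ^ 2) = 0 := by
  apply odd_zero; intro x; simp [neg_mul]; ring

lemma tendsto_pow_mul_gauss {a : ℝ} (ha : 0 < a) (k : ℕ) :
    Tendsto (fun x : ℝ => x ^ k * Real.exp (-a * x ^ 2)) (cocompact ℝ) (nhds 0) := by
  rw [tendsto_zero_iff_norm_tendsto_zero]
  apply (tendsto_rpow_abs_mul_exp_neg_mul_sq_cocompact ha k).congr
  intro x
  rw [Real.rpow_natCast, norm_mul, Real.norm_eq_abs, Real.norm_eq_abs, abs_pow,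
    abs_of_nonneg (Real.exp_pos _).le]

lemma gauss_m2 {a : ℝ} (ha : 0 < a) :
    ∫ x : ℝ, x ^ 2 * Real.exp (-a * x ^ 2) = Real.sqrt (π / a) / (2 * a) := by
  have hderiv : ∀ x : ℝ, HasDerivAt (fun x : ℝ => x * Real.exp (-a * x ^ 2))
      (Real.exp (-a * x ^ 2) - 2 * a * (x ^ 2 * Real.exp (-a * x ^ 2))) x := by
    intro x
    have h1 : HasDerivAt (fun x : ℝ => -a * x ^ 2) (-a * (2 * x)) x := by
      simpa using ((hasDerivAt_pow 2 x).const_mul (-a))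
    have : HasDerivAt (fun x : ℝ => x * Real.exp (-a * x ^ 2)) _ x := (hasDerivAt_id x).mul h1.exp
    convert this using 1
    simp only [id]
    ring
  have hint : Integrable (fun x : ℝ =>
      Real.exp (-a * x ^ 2) - 2 * a * (x ^ 2 * Real.exp (-a * x ^ 2))) :=
    (integrable_exp_neg_mul_sq ha).sub (((intble_pow_gauss ha 2)).const_mul _)
  have htop : Tendsto (fun x : ℝ => x * Real.exp (-a * x ^ 2)) atTop (nhds 0) := by
    have := (tendsto_pow_mul_gauss ha 1).mono_left _root_.atTop_le_cocompact
    simpa using this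
  have hbot : Tendsto (fun x : ℝ => x * Real.exp (-a * x ^ 2)) atBot (nhds 0) := by
    have := (tendsto_pow_mul_gauss ha 1).mono_left _root_.atBot_le_cocompact
    simpa using this
  have h0 := MeasureTheory.integral_of_hasDerivAt_of_tendsto hderiv hint hbot htop
  rw [sub_self] at h0
  rw [integral_sub (integrable_exp_neg_mul_sq ha) ((intble_pow_gauss ha 2).const_mul _),
    MeasureTheory.integral_const_mul, integral_gaussian] at h0
  have h2a : (2 * a) ≠ 0 := by positivity
  field_simp at h0 ⊢
  linarith

lemma poly_gauss {a : ℝ} (ha : 0 < a) (c0 c1 c2 c3 : ℝ) :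
    ∫ x : ℝ, (c0 + c1 * x + c2 * x ^ 2 + c3 * x ^ 3) * Real.exp (-a * x ^ 2)
      = (c0 + c2 / (2 * a)) * Real.sqrt (π / a) := by
  have e0 : Integrable (fun x : ℝ => c0 * Real.exp (-a * x ^ 2)) :=
    (integrable_exp_neg_mul_sq ha).const_mul _
  have e1 : Integrable (fun x : ℝ => c1 * (x * Real.exp (-a * x ^ 2))) := by
    simpa using (intble_pow_gauss ha 1).const_mul c1
  have e2 : Integrable (fun x : ℝ => c2 * (x ^ 2 * Real.exp (-a * x ^ 2))) :=
    (intble_pow_gauss ha 2).const_mul c2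
  have e3 : Integrable (fun x : ℝ => c3 * (x ^ 3 * Real.exp (-a * x ^ 2))) :=
    (intble_pow_gauss ha 3).const_mul c3
  have e23 : Integrable (fun x : ℝ => c2 * (x ^ 2 * Real.exp (-a * x ^ 2))
      + c3 * (x ^ 3 * Real.exp (-a * x ^ 2))) := e2.add e3
  have e123 : Integrable (fun x : ℝ => c1 * (x * Real.exp (-a * x ^ 2))
      + (c2 * (x ^ 2 * Real.exp (-a * x ^ 2)) + c3 * (x ^ 3 * Real.exp (-a * x ^ 2)))) :=
    e1.add e23
  have : ∫ x : ℝ, (c0 + c1 * x + c2 * x ^ 2 + c3 * x ^ 3) * Real.exp (-a * x ^ 2)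
      = ∫ x : ℝ, (c0 * Real.exp (-a * x ^ 2) + (c1 * (x * Real.exp (-a * x ^ 2))
        + (c2 * (x ^ 2 * Real.exp (-a * x ^ 2)) + c3 * (x ^ 3 * Real.exp (-a * x ^ 2))))) := by
    congr 1; funext x; ring
  rw [this, integral_add e0 e123, integral_add e1 e23,
    integral_add e2 e3, MeasureTheory.integral_const_mul, MeasureTheory.integral_const_mul,
    MeasureTheory.integral_const_mul, MeasureTheory.integral_const_mul,
    integral_gaussian, gauss_m1, gauss_m2 ha, gauss_m3]
  ring

lemma complete_square {a c : ℝ} (ha : 0 < a) (x : ℝ) :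
    Real.exp (c * x - a * x ^ 2)
      = Real.exp (c ^ 2 / (4 * a)) * Real.exp (-a * (x - c / (2 * a)) ^ 2) := by
  rw [← Real.exp_add]
  congr 1
  field_simp
  ring

lemma poly_gauss_lin {a c : ℝ} (ha : 0 < a) (c0 c1 c2 c3 : ℝ) :
    ∫ x : ℝ, (c0 + c1 * x + c2 * x ^ 2 + c3 * x ^ 3) * Real.exp (c * x - a * x ^ 2)
      = Real.exp (c ^ 2 / (4 * a)) *
        ((c0 + c1 * (c / (2 * a)) + c2 * ((c / (2 * a)) ^ 2 + 1 / (2 * a))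
          + c3 * ((c / (2 * a)) ^ 3 + 3 * (c / (2 * a)) * (1 / (2 * a))))
          * Real.sqrt (π / a)) := by
  set m := c / (2 * a) with hm
  have step1 : ∫ x : ℝ, (c0 + c1 * x + c2 * x ^ 2 + c3 * x ^ 3) * Real.exp (c * x - a * x ^ 2)
      = Real.exp (c ^ 2 / (4 * a)) *
        ∫ x : ℝ, (c0 + c1 * x + c2 * x ^ 2 + c3 * x ^ 3) * Real.exp (-a * (x - m) ^ 2) := by
    rw [← MeasureTheory.integral_const_mul]
    congr 1; funext x
    rw [complete_square ha x]; ring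
  have step2 : ∫ x : ℝ, (c0 + c1 * x + c2 * x ^ 2 + c3 * x ^ 3) * Real.exp (-a * (x - m) ^ 2)
      = ∫ y : ℝ, ((c0 + c1 * m + c2 * m ^ 2 + c3 * m ^ 3)
          + (c1 + 2 * c2 * m + 3 * c3 * m ^ 2) * y
          + (c2 + 3 * c3 * m) * y ^ 2 + c3 * y ^ 3) * Real.exp (-a * y ^ 2) := by
    rw [← MeasureTheory.integral_add_right_eq_self
      (fun x => (c0 + c1 * x + c2 * x ^ 2 + c3 * x ^ 3) * Real.exp (-a * (x - m) ^ 2)) m]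
    congr 1; funext y
    simp only [add_sub_cancel_right]
    ring
  rw [step1, step2, poly_gauss ha]
  congr 1
  ring

end GaussAux

lemma integral_Ioi_eq (g : ℝ → ℝ) :
    ∫ x in Ioi (0 : ℝ), g x = ∫ y : ℝ, Real.exp y * g (Real.exp y) := by
  rw [← Real.range_exp, ← image_univ,
    integral_image_eq_integral_abs_deriv_smul MeasurableSet.univ
      (fun x _ => (Real.hasDerivAt_exp x).hasDerivWithinAt) Real.exp_injective.injOn]
  simp [abs_of_pos (Real.exp_pos _), smul_eq_mul]

lemma lognormal_poly (μ σ p c0 c1 c2 c3 : ℝ) (hσ : 0 < σ) :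
    ∫ x in Ioi (0 : ℝ), (c0 + c1 * (Real.log x - μ) + c2 * (Real.log x - μ) ^ 2
        + c3 * (Real.log x - μ) ^ 3) * lognormalPdf μ σ x ^ p
      = (σ * Real.sqrt (2 * π)) ^ (-p) * Real.exp ((1 - p) * μ) *
        ∫ t : ℝ, (c0 + c1 * t + c2 * t ^ 2 + c3 * t ^ 3) *
          Real.exp ((1 - p) * t - p / (2 * σ ^ 2) * t ^ 2) := by
  have hc0 : (0 : ℝ) < σ * Real.sqrt (2 * π) := by positivity
  have pdfval : ∀ y : ℝ, lognormalPdf μ σ (Real.exp y) ^ p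
      = (σ * Real.sqrt (2 * π)) ^ (-p)
        * Real.exp ((-y - (y - μ) ^ 2 / (2 * σ ^ 2)) * p) := by
    intro y
    rw [lognormalPdf, if_pos (Real.exp_pos y), Real.log_exp]
    have h1 : (1 / (Real.exp y * σ * Real.sqrt (2 * π)))
          * Real.exp (-(y - μ) ^ 2 / (2 * σ ^ 2))
        = (σ * Real.sqrt (2 * π))⁻¹ * Real.exp (-y - (y - μ) ^ 2 / (2 * σ ^ 2)) := by
      rw [show -y - (y - μ) ^ 2 / (2 * σ ^ 2)
          = (-y) + (-(y - μ) ^ 2 / (2 * σ ^ 2)) by ring, Real.exp_add, Real.exp_neg]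
      field_simp
    rw [h1, Real.mul_rpow (by positivity) (Real.exp_pos _).le,
      Real.inv_rpow hc0.le, ← Real.rpow_neg hc0.le, ← Real.exp_mul]
  rw [integral_Ioi_eq]
  have step1 : (∫ y : ℝ, Real.exp y * ((c0 + c1 * (Real.log (Real.exp y) - μ)
        + c2 * (Real.log (Real.exp y) - μ) ^ 2 + c3 * (Real.log (Real.exp y) - μ) ^ 3)
        * lognormalPdf μ σ (Real.exp y) ^ p))
      = ∫ y : ℝ, (σ * Real.sqrt (2 * π)) ^ (-p) * ((c0 + c1 * (y - μ) + c2 * (y - μ) ^ 2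
        + c3 * (y - μ) ^ 3) * Real.exp (y + (-y - (y - μ) ^ 2 / (2 * σ ^ 2)) * p)) := by
    congr 1; funext y
    rw [Real.log_exp, pdfval y, Real.exp_add]
    ring
  rw [step1, MeasureTheory.integral_const_mul, mul_assoc]
  congr 1
  rw [← MeasureTheory.integral_add_right_eq_self (fun y : ℝ => (c0 + c1 * (y - μ)
      + c2 * (y - μ) ^ 2 + c3 * (y - μ) ^ 3)
      * Real.exp (y + (-y - (y - μ) ^ 2 / (2 * σ ^ 2)) * p)) μ]
  rw [← MeasureTheory.integral_const_mul]
  congr 1; funext t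
  have h2 : t + μ + (-(t + μ) - t ^ 2 / (2 * σ ^ 2)) * p
      = (1 - p) * μ + ((1 - p) * t - p / (2 * σ ^ 2) * t ^ 2) := by
    field_simp
    ring
  simp only [add_sub_cancel_right]
  rw [h2, Real.exp_add]
  ring

lemma base_split {σ : ℝ} (hσ : 0 < σ) (r : ℝ) :
    (σ * Real.sqrt (2 * π)) ^ r = σ ^ r * (2 * π) ^ (r / 2) := by
  rw [Real.mul_rpow hσ.le (Real.sqrt_nonneg _), Real.sqrt_eq_rpow,
    ← Real.rpow_mul (by positivity : (0:ℝ) ≤ 2 * π)]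
  rw [show 1 / (2:ℝ) * r = r / 2 by ring]

lemma sqrt_pi_div {σ R : ℝ} (hσ : 0 < σ) (hR : 0 < R) :
    Real.sqrt (π / (R / (2 * σ ^ 2))) = σ * Real.sqrt (2 * π) / Real.sqrt R := by
  rw [show π / (R / (2 * σ ^ 2)) = (2 * π) * σ ^ 2 / R by field_simp]
  rw [Real.sqrt_div (by positivity), Real.sqrt_mul (by positivity), Real.sqrt_sq hσ.le]
  ring

lemma rpow_5_2 {x : ℝ} (hx : 0 < x) : x ^ ((5:ℝ)/2) = x ^ 2 * Real.sqrt x := by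
  rw [show (5:ℝ)/2 = 2 + 1/2 by norm_num, Real.rpow_add hx, Real.sqrt_eq_rpow,
    show (2:ℝ) = ((2:ℕ):ℝ) by norm_num, Real.rpow_natCast]

/-- The off-diagonal entry of the matrix `K_β(μ,σ)`. -/
theorem K_entry_12 (μ σ β : ℝ) (hσ : 0 < σ) (hβ : 0 ≤ β) :
    (∫ x in Ioi (0 : ℝ), scoreU1 μ σ x * scoreU2 μ σ x * lognormalPdf μ σ x ^ (1 + 2 * β)) -
        (∫ x in Ioi (0 : ℝ), scoreU1 μ σ x * lognormalPdf μ σ x ^ (1 + β)) *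
          (∫ x in Ioi (0 : ℝ), scoreU2 μ σ x * lognormalPdf μ σ x ^ (1 + β)) =
      Lstar β μ σ * (β * (4 * β - 4 - 8 * β ^ 2 * σ ^ 2 / (1 + 2 * β))) +
        Lstarstar β μ σ * (σ * β ^ 2 * (β * σ ^ 2 - β - 1) / (1 + β)) := by
  have hP : (0:ℝ) < 1 + 2 * β := by linarith
  have hQ : (0:ℝ) < 1 + β := by linarith
  have h2π : (0:ℝ) < 2 * π := by positivity
  have hc0 : (0:ℝ) < σ * Real.sqrt (2 * π) := by positivity
  have haP : (0:ℝ) < (1 + 2 * β) / (2 * σ ^ 2) := by positivity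
  have haQ : (0:ℝ) < (1 + β) / (2 * σ ^ 2) := by positivity
  have hσ' : σ ≠ 0 := hσ.ne'
  -- rewrite the integrands in polynomial form
  have key1 : (fun x : ℝ => scoreU1 μ σ x * scoreU2 μ σ x * lognormalPdf μ σ x ^ (1 + 2 * β))
      = fun x : ℝ => ((0:ℝ) + (-(1 / σ ^ 3)) * (Real.log x - μ) + 0 * (Real.log x - μ) ^ 2
        + (1 / σ ^ 5) * (Real.log x - μ) ^ 3) * lognormalPdf μ σ x ^ (1 + 2 * β) := by
    funext x; simp only [scoreU1, scoreU2]; field_simp; ring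
  have key2 : (fun x : ℝ => scoreU1 μ σ x * lognormalPdf μ σ x ^ (1 + β))
      = fun x : ℝ => ((0:ℝ) + (1 / σ ^ 2) * (Real.log x - μ) + 0 * (Real.log x - μ) ^ 2
        + 0 * (Real.log x - μ) ^ 3) * lognormalPdf μ σ x ^ (1 + β) := by
    funext x; simp only [scoreU1, scoreU2]; field_simp; ring
  have key3 : (fun x : ℝ => scoreU2 μ σ x * lognormalPdf μ σ x ^ (1 + β))
      = fun x : ℝ => ((-(1 / σ)) + (0:ℝ) * (Real.log x - μ) + (1 / σ ^ 3) * (Real.log x - μ) ^ 2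
        + 0 * (Real.log x - μ) ^ 3) * lognormalPdf μ σ x ^ (1 + β) := by
    funext x; simp only [scoreU1, scoreU2]; field_simp; ring
  rw [show (∫ x in Ioi (0:ℝ), scoreU1 μ σ x * scoreU2 μ σ x * lognormalPdf μ σ x ^ (1 + 2 * β))
      = ∫ x in Ioi (0:ℝ), ((0:ℝ) + (-(1 / σ ^ 3)) * (Real.log x - μ)
        + 0 * (Real.log x - μ) ^ 2
        + (1 / σ ^ 5) * (Real.log x - μ) ^ 3) * lognormalPdf μ σ x ^ (1 + 2 * β) from by
      rw [key1]]
  rw [show (∫ x in Ioi (0:ℝ), scoreU1 μ σ x * lognormalPdf μ σ x ^ (1 + β))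
      = ∫ x in Ioi (0:ℝ), ((0:ℝ) + (1 / σ ^ 2) * (Real.log x - μ) + 0 * (Real.log x - μ) ^ 2
        + 0 * (Real.log x - μ) ^ 3) * lognormalPdf μ σ x ^ (1 + β) from by rw [key2]]
  rw [show (∫ x in Ioi (0:ℝ), scoreU2 μ σ x * lognormalPdf μ σ x ^ (1 + β))
      = ∫ x in Ioi (0:ℝ), ((-(1 / σ)) + (0:ℝ) * (Real.log x - μ)
        + (1 / σ ^ 3) * (Real.log x - μ) ^ 2
        + 0 * (Real.log x - μ) ^ 3) * lognormalPdf μ σ x ^ (1 + β) from by rw [key3]]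
  rw [lognormal_poly μ σ (1 + 2 * β) _ _ _ _ hσ, lognormal_poly μ σ (1 + β) _ _ _ _ hσ,
    lognormal_poly μ σ (1 + β) _ _ _ _ hσ, poly_gauss_lin haP, poly_gauss_lin haQ,
    poly_gauss_lin haQ]
  -- convert the sqrt factors
  rw [sqrt_pi_div hσ hP, sqrt_pi_div hσ hQ]
  -- reshape the product of the two Q-integrals
  have gen : ∀ b e g c1 c2 w s : ℝ, (b * e * (g * (c1 * (w / s)))) * (b * e * (g * (c2 * (w / s))))
      = (b * b) * ((e * e) * ((g * g) * ((w * w) / (s * s) * (c1 * c2)))) := by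
    intros; ring
  rw [gen]
  have hBB : (σ * Real.sqrt (2 * π)) ^ (-(1 + β)) * (σ * Real.sqrt (2 * π)) ^ (-(1 + β))
      = (σ ^ (2 * β + 2) * ((2 * Real.pi) ^ β * (2 * π)))⁻¹ := by
    rw [← Real.rpow_add hc0, show -(1 + β) + -(1 + β) = -(2 * β + 2) by ring,
      Real.rpow_neg hc0.le, base_split hσ, show (2 * β + 2) / 2 = β + 1 by ring,
      Real.rpow_add h2π, Real.rpow_one]
  have hEE : Real.exp ((1 - (1 + β)) * μ) * Real.exp ((1 - (1 + β)) * μ)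
      = Real.exp (-2 * β * μ) := by
    rw [← Real.exp_add]; congr 1; ring
  have hGG : Real.exp ((1 - (1 + β)) ^ 2 / (4 * ((1 + β) / (2 * σ ^ 2))))
        * Real.exp ((1 - (1 + β)) ^ 2 / (4 * ((1 + β) / (2 * σ ^ 2))))
      = Real.exp (β ^ 2 * σ ^ 2 / (1 + β)) := by
    rw [← Real.exp_add]; congr 1; field_simp; ring
  have hWW : (σ * Real.sqrt (2 * π)) * (σ * Real.sqrt (2 * π)) = σ ^ 2 * (2 * π) := by
    rw [show (σ * Real.sqrt (2 * π)) * (σ * Real.sqrt (2 * π))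
      = (σ * σ) * (Real.sqrt (2 * π) * Real.sqrt (2 * π)) by ring,
      Real.mul_self_sqrt h2π.le]
    ring
  have hSS : Real.sqrt (1 + β) * Real.sqrt (1 + β) = 1 + β := Real.mul_self_sqrt hQ.le
  rw [hBB, hEE, hGG, hWW, hSS]
  -- first term exponentials
  have hX1 : Real.exp ((1 - (1 + 2 * β)) * μ) = Real.exp (-2 * β * μ) := by
    congr 1; ring
  have hG1 : Real.exp ((1 - (1 + 2 * β)) ^ 2 / (4 * ((1 + 2 * β) / (2 * σ ^ 2))))
      = Real.exp (2 * β ^ 2 * σ ^ 2 / (1 + 2 * β)) := by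
    congr 1; field_simp; ring
  rw [hX1, hG1]
  have hA : (σ * Real.sqrt (2 * π)) ^ (-(1 + 2 * β))
      = (σ ^ (2 * β + 1) * ((2 * Real.pi) ^ β * Real.sqrt (2 * π)))⁻¹ := by
    have e1 : (σ:ℝ) ^ (-(1 + 2 * β)) = (σ ^ (2 * β + 1))⁻¹ := by
      rw [show -(1 + 2 * β) = -(2 * β + 1) by ring, Real.rpow_neg hσ.le]
    have e2 : ((2 * π):ℝ) ^ (-(1 + 2 * β) / 2) = ((2 * Real.pi) ^ β * Real.sqrt (2 * π))⁻¹ := by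
      rw [show -(1 + 2 * β) / 2 = -(β + 1 / 2) by ring, Real.rpow_neg h2π.le,
        Real.rpow_add h2π, ← Real.sqrt_eq_rpow]
    rw [base_split hσ, e1, e2]
    simp [mul_inv]
    ring
  rw [hA]
  simp only [Lstar, Lstarstar]
  rw [Real.exp_add, Real.exp_add, rpow_5_2 hP]
  have n1 : (σ:ℝ) ^ (2 * β + 1) ≠ 0 := (Real.rpow_pos_of_pos hσ _).ne'
  have n2 : (σ:ℝ) ^ (2 * β + 2) ≠ 0 := (Real.rpow_pos_of_pos hσ _).ne'
  have n3 : ((2 * Real.pi):ℝ) ^ β ≠ 0 := (Real.rpow_pos_of_pos h2π _).ne'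
  have n4 : Real.sqrt (2 * π) ≠ 0 := (Real.sqrt_pos.mpr h2π).ne'
  have n5 : Real.sqrt (1 + 2 * β) ≠ 0 := (Real.sqrt_pos.mpr hP).ne'
  field_simp
  ring
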